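/- Let n ≥ 3, 1 ≤ u ≤ n and m ≥ 1. Let a = (a_1,…,a_n) ∈ R_n^n with a_u = 0 be an R_n-linear combination of the row vectors m(σ_i e_j − σ_j e_i) for i,j ≠ u with i ≠ j, σ_kμ_{k,m}(σ_i e_j − σ_j e_i) for i,j,k ≠ u with i ≠ j, and σ_kμ_{i,m}(σ_i e_j − σ_j e_i) for i,j,k ≠ u with i ≠ j and k ≠ j, where e_j denotes the j-th standard basis row vector. Then the matrix I_n + Σ_{v≠u} a_v E_{u,v}, which equals the identity except in the u-th row, lies in IA_n^m. -/

import Mathlib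

noncomputable section

open Matrix

/-- The Laurent polynomial ring `ℤ[x₁^{±1},…,x_n^{±1}]`, realized as the group
algebra of the free abelian group `ℤⁿ` over `ℤ`. -/
abbrev LaurentR (n : ℕ) : Type := AddMonoidAlgebra ℤ (Fin n →₀ ℤ)

/-- `x_i` as a unit of `LaurentR n`. -/
def Xu {n : ℕ} (i : Fin n) : (LaurentR n)ˣ where
  val := AddMonoidAlgebra.single (Finsupp.single i 1) 1
  inv := AddMonoidAlgebra.single (-Finsupp.single i 1) 1
  val_inv := by
    rw [AddMonoidAlgebra.single_mul_single]
    simp [AddMonoidAlgebra.one_def]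
  inv_val := by
    rw [AddMonoidAlgebra.single_mul_single]
    simp [AddMonoidAlgebra.one_def]

/-- `x_i` as an element of `LaurentR n`. -/
def Xv {n : ℕ} (i : Fin n) : LaurentR n := (Xu i : LaurentR n)

/-- `σ_i = x_i - 1`. -/
def sg {n : ℕ} (i : Fin n) : LaurentR n := Xv i - 1

/-- The vector `σ⃗`. -/
def sgVec (n : ℕ) : Fin n → LaurentR n := fun i => sg i

/-- `μ_{r,m} = 1 + x_r + ⋯ + x_r^{m-1}`. -/
def muv {n : ℕ} (r : Fin n) (m : ℕ) : LaurentR n := ∑ i ∈ Finset.range m, Xv r ^ i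

/-- The augmentation ideal `𝔄_n = Σ σ_i R_n`. -/
def augI (n : ℕ) : Ideal (LaurentR n) := Ideal.span (Set.range (sgVec n))

/-- The ideal `m·R_n`. -/
def OI (n m : ℕ) : Ideal (LaurentR n) := Ideal.span {(m : LaurentR n)}

/-- The ideal `H_{n,m} = Σ_r (x_r^m − 1)R_n + mR_n`. -/
def HI (n m : ℕ) : Ideal (LaurentR n) :=
  Ideal.span (Set.range (fun r : Fin n => Xv r ^ m - 1) ∪ {(m : LaurentR n)})

/-- `IA_n = {A ∈ GL_n(R_n) : A·σ⃗ = σ⃗}` as a subgroup of `GL_n(R_n)`. -/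
def IAn (n : ℕ) : Subgroup (GL (Fin n) (LaurentR n)) where
  carrier := {g | (g : Matrix (Fin n) (Fin n) (LaurentR n)) *ᵥ sgVec n = sgVec n}
  one_mem' := by simp
  mul_mem' := by
    intro a b ha hb
    simp only [Set.mem_setOf_eq, Units.val_mul] at *
    rw [← Matrix.mulVec_mulVec, hb, ha]
  inv_mem' := by
    intro a ha
    simp only [Set.mem_setOf_eq] at *
    have h : ((a⁻¹ : GL (Fin n) (LaurentR n)) : Matrix (Fin n) (Fin n) (LaurentR n)) *ᵥ
        ((a : Matrix (Fin n) (Fin n) (LaurentR n)) *ᵥ sgVec n) = sgVec n := by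
      rw [Matrix.mulVec_mulVec, ← Units.val_mul, inv_mul_cancel, Units.val_one,
        Matrix.one_mulVec]
    rw [ha] at h
    exact h

/-- The underlying matrix of an element of `IA_n`. -/
def matOf {n : ℕ} (g : IAn n) : Matrix (Fin n) (Fin n) (LaurentR n) :=
  ((g : GL (Fin n) (LaurentR n)) : Matrix (Fin n) (Fin n) (LaurentR n))

/-- The principal congruence subgroup `IG_{n,m}` (as a subset of `IA_n`). -/
def IGnm (n m : ℕ) : Set (IAn n) := {g | ∀ k l, (matOf g - 1) k l ∈ HI n m}

/-- `IA_n^m`: the subgroup of `IA_n` generated by all `m`-th powers. -/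
def IApow (n m : ℕ) : Subgroup (IAn n) := Subgroup.closure (Set.range fun g : IAn n => g ^ m)


/-- `ISL_{n−1,i}(H)` for `n = k+1`: elements `I + A` of `IA_n` whose `i`-th row of `A`
vanishes, all entries of the minor `A_{i,i}` lie in `σ_iR_n ∩ H`, and
`det(I_{n−1} + A_{i,i}) = 1`. -/
def ISL {k : ℕ} (i : Fin (k + 1)) (H : Ideal (LaurentR (k + 1))) : Set (IAn (k + 1)) :=
  {g | (∀ l, (matOf g - 1) i l = 0) ∧
    (∀ a b : Fin k, (matOf g - 1) (i.succAbove a) (i.succAbove b) ∈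
      Ideal.span {sg i} ⊓ H) ∧
    ((matOf g).submatrix i.succAbove i.succAbove).det = 1}

/-- `IGL_{n−1,i}` for `n = k+1`: elements `I + A` of `IA_n` whose `i`-th row of `A`
vanishes and all entries of the minor `A_{i,i}` lie in `σ_iR_n`. -/
def IGLset {k : ℕ} (i : Fin (k + 1)) : Set (IAn (k + 1)) :=
  {g | (∀ l, (matOf g - 1) i l = 0) ∧
    ∀ a b : Fin k, (matOf g - 1) (i.succAbove a) (i.succAbove b) ∈ Ideal.span {sg i}}

/-- The elementary matrix `I_d + r·E_{a,b}` (`a ≠ b`) as an element of `GL_d(A)`. -/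
def elemGL {d : ℕ} {A : Type*} [CommRing A] (a b : Fin d) (hab : a ≠ b) (r : A) :
    GL (Fin d) A where
  val := 1 + Matrix.single a b r
  inv := 1 - Matrix.single a b r
  val_inv := by
    have h2 : Matrix.single a b r * Matrix.single a b r = 0 :=
      Matrix.single_mul_single_of_ne (i := a) (j := b) (k := a) (h := hab.symm) (c := r) (d := r)
    rw [mul_sub, mul_one, add_mul, one_mul, h2]
    abel
  inv_val := by
    have h2 : Matrix.single a b r * Matrix.single a b r = 0 :=
      Matrix.single_mul_single_of_ne (i := a) (j := b) (k := a) (h := hab.symm) (c := r) (d := r)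
    rw [sub_mul, one_mul, mul_add, mul_one, h2]
    abel

/-- `E_d(A)`: the subgroup generated by the elementary matrices. -/
def Egrp (d : ℕ) (A : Type*) [CommRing A] : Subgroup (GL (Fin d) A) :=
  Subgroup.closure {g | ∃ (a b : Fin d) (hab : a ≠ b) (r : A), g = elemGL a b hab r}

/-- `E_d(A,H)`: the normal closure in `E_d(A)` of the elementary matrices with
parameter in the ideal `H`. -/
def EgrpRel (d : ℕ) (A : Type*) [CommRing A] (H : Ideal A) : Subgroup (GL (Fin d) A) :=
  Subgroup.closure {g | ∃ e ∈ Egrp d A, ∃ (a b : Fin d) (hab : a ≠ b), ∃ r ∈ H,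
    g = e * elemGL a b hab r * e⁻¹}

/-- The generic column ideal used in the definitions of `J_{m,u,v}` and `J̃_{m,u,v}`
(with 1-indexed `u ∈ {0,…,n}` and `v` a 0-indexed column, so "`v ≤ u`" reads
`v.val < u`).  `lead` is the leading factor (`𝔄̃_u` resp. `𝔄_n`). -/
def colIdeal (n m u : ℕ) (lead : Ideal (LaurentR n)) (v : Fin n) : Ideal (LaurentR n) :=
  lead * ((∑ r : Fin n, if r.val < u then augI n * Ideal.span {sg r * muv r m} else 0)
      + augI n * OI n m + OI n m ^ 2)
    + (if v.val < u then
        ∑ r : Fin n, if u ≤ r.val then Ideal.span {sg r ^ 3 * muv r m} else 0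
      else
        (∑ r : Fin n, if u ≤ r.val ∧ r ≠ v then Ideal.span {sg r ^ 3 * muv r m} else 0)
          + augI n * Ideal.span {sg v ^ 2 * muv v m})

/-- `𝔄̃_u = Σ_{r=u+1}^n σ_rR_n` (1-indexed `u`). -/
def augTil (n u : ℕ) : Ideal (LaurentR n) :=
  Ideal.span {x | ∃ r : Fin n, u ≤ r.val ∧ x = sg r}

/-- The ideal `J̃_{m,u,v}`. -/
def Jtil (n m u : ℕ) (v : Fin n) : Ideal (LaurentR n) := colIdeal n m u (augTil n u) v

/-- The ideal `J_{m,u,v}`. -/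
def Jfull (n m u : ℕ) (v : Fin n) : Ideal (LaurentR n) := colIdeal n m u (augI n) v

/-- The determinant condition `det = ∏_r x_r^{s_r·m²}`. -/
def detMon (n m : ℕ) (g : IAn n) : Prop :=
  ∃ s : Fin n → ℤ,
    (matOf g).det = ∏ r : Fin n, ((Xu r ^ (s r * (m : ℤ) ^ 2) : (LaurentR n)ˣ) : LaurentR n)

/-- The set `𝕁̃_{m,u}`. -/
def JmatTil (n m u : ℕ) : Set (IAn n) :=
  {g | (∀ k v, (matOf g - 1) k v ∈ Jtil n m u v) ∧ detMon n m g}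

/-- The set `𝕁_{m,u}`. -/
def JmatFull (n m u : ℕ) : Set (IAn n) :=
  {g | (∀ k v, (matOf g - 1) k v ∈ Jfull n m u v) ∧ detMon n m g}

/-- The ideal `J_m = Σ_r σ_r³μ_{r,m}R_n + 𝔄_n²·mR_n + 𝔄_n·m²R_n`. -/
def JmI (n m : ℕ) : Ideal (LaurentR n) :=
  Ideal.span (Set.range fun r : Fin n => sg r ^ 3 * muv r m)
    + augI n ^ 2 * OI n m + augI n * OI n (m ^ 2)

/-- The free metabelian group `Φ_n = F_n/F_n''`. -/
instance derivedSeries_normal' (G : Type*) [Group G] (n : ℕ) : (derivedSeries G n).Normal :=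
  derivedSeries_normal _ _

def Phi (n : ℕ) : Type := FreeGroup (Fin n) ⧸ derivedSeries (FreeGroup (Fin n)) 2

instance (n : ℕ) : Group (Phi n) :=
  inferInstanceAs (Group (FreeGroup (Fin n) ⧸ derivedSeries (FreeGroup (Fin n)) 2))

section Stmt11Aux

variable {n : ℕ}

/-- The matrix with `p`-th row equal to `v` if `p = u` and `0` otherwise. -/
def rowE (u : Fin n) (v : Fin n → LaurentR n) : Matrix (Fin n) (Fin n) (LaurentR n) :=
  Matrix.vecMulVec (Pi.single u 1) v

lemma rowE_apply (u : Fin n) (v : Fin n → LaurentR n) (p q : Fin n) :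
    rowE u v p q = if p = u then v q else 0 := by
  simp [rowE, Matrix.vecMulVec_apply, Pi.single_apply, ite_mul]

lemma rowE_add (u : Fin n) (v w : Fin n → LaurentR n) :
    rowE u (v + w) = rowE u v + rowE u w := by
  ext p q
  simp only [rowE_apply, Matrix.add_apply, Pi.add_apply]
  split <;> simp

lemma rowE_smul (u : Fin n) (r : LaurentR n) (v : Fin n → LaurentR n) :
    rowE u (r • v) = r • rowE u v := by
  ext p q
  simp only [rowE_apply, Matrix.smul_apply, Pi.smul_apply, smul_eq_mul]
  split <;> simp

lemma rowE_zero (u : Fin n) : rowE u (0 : Fin n → LaurentR n) = 0 := by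
  ext p q
  simp [rowE_apply]

lemma rowE_mul (u : Fin n) (v w : Fin n → LaurentR n) :
    rowE u v * rowE u w = v u • rowE u w := by
  ext p q
  simp only [Matrix.mul_apply, rowE_apply, Matrix.smul_apply, smul_eq_mul]
  by_cases hp : p = u
  · simp only [hp, if_true, ite_mul, zero_mul, mul_ite, mul_zero]
    rw [Finset.sum_ite_eq' Finset.univ u (fun t => v t * w q)]
    simp [mul_comm]
  · simp [hp]

lemma one_add_rowE_mul (u : Fin n) (v w : Fin n → LaurentR n) :
    (1 + rowE u v) * (1 + rowE u w) = 1 + rowE u (v + (1 + v u) • w) := by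
  have hv : v + (1 + v u) • w = (v + w) + v u • w := by
    rw [add_smul, one_smul]; abel
  rw [hv, rowE_add, rowE_add, rowE_smul]
  simp only [mul_add, add_mul, one_mul, mul_one, rowE_mul]
  abel

lemma one_add_rowE_pow (u : Fin n) (v : Fin n → LaurentR n) (α : LaurentR n)
    (hα : v u = α - 1) (t : ℕ) :
    (1 + rowE u v) ^ t = 1 + rowE u ((∑ s ∈ Finset.range t, α ^ s) • v) := by
  induction t with
  | zero => simp [rowE_zero]
  | succ t ih =>
    rw [pow_succ, ih, one_add_rowE_mul]
    congr 2
    have h2 : (1 : LaurentR n) + ((∑ s ∈ Finset.range t, α ^ s) • v) u = α ^ t := by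
      simp only [Pi.smul_apply, smul_eq_mul, hα, geom_sum_mul]
      ring
    rw [h2, Finset.sum_range_succ, add_smul]

/-- The element `1 + rowE u v` of `GL_n(R_n)`, where `1 + v u = α` is a unit. -/
def mkGL (u : Fin n) (v : Fin n → LaurentR n) (α : (LaurentR n)ˣ)
    (hα : v u = (α : LaurentR n) - 1) : GL (Fin n) (LaurentR n) where
  val := 1 + rowE u v
  inv := 1 + rowE u ((-(↑α⁻¹ : LaurentR n)) • v)
  val_inv := by
    rw [one_add_rowE_mul]
    have h : v + (1 + v u) • (-(↑α⁻¹ : LaurentR n)) • v = 0 := by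
      rw [hα, smul_smul]
      have hu : (α : LaurentR n) * (↑α⁻¹ : LaurentR n) = 1 := α.mul_inv
      have h1 : (1 + ((α : LaurentR n) - 1)) * (-(↑α⁻¹ : LaurentR n)) = -1 := by
        linear_combination -hu
      rw [h1, neg_one_smul, add_neg_cancel]
    rw [h, rowE_zero, add_zero]
  inv_val := by
    rw [one_add_rowE_mul]
    have h : (-(↑α⁻¹ : LaurentR n)) • v
        + (1 + ((-(↑α⁻¹ : LaurentR n)) • v) u) • v = 0 := by
      have hu : (↑α⁻¹ : LaurentR n) * (α : LaurentR n) = 1 := α.inv_mul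
      have h1 : (1 : LaurentR n) + ((-(↑α⁻¹ : LaurentR n)) • v) u = (↑α⁻¹ : LaurentR n) := by
        simp only [Pi.smul_apply, smul_eq_mul, hα]
        linear_combination -hu
      rw [h1]
      ext q
      simp only [Pi.add_apply, Pi.smul_apply, smul_eq_mul, Pi.zero_apply]
      ring
    rw [h, rowE_zero, add_zero]

lemma one_add_rowE_mulVec (u : Fin n) (v : Fin n → LaurentR n)
    (hc : ∑ q, v q * sg q = 0) :
    (1 + rowE u v) *ᵥ sgVec n = sgVec n := by
  rw [Matrix.add_mulVec, Matrix.one_mulVec]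
  have h : rowE u v *ᵥ sgVec n = 0 := by
    funext p
    show ∑ q, rowE u v p q * sgVec n q = 0
    simp only [rowE_apply, ite_mul, zero_mul]
    by_cases hp : p = u
    · simpa [hp, sgVec] using hc
    · simp [hp]
  rw [h, add_zero]

/-- `mkGL` as an element of `IA_n`. -/
def mkIA (u : Fin n) (v : Fin n → LaurentR n) (α : (LaurentR n)ˣ)
    (hα : v u = (α : LaurentR n) - 1) (hc : ∑ q, v q * sg q = 0) : IAn n :=
  ⟨mkGL u v α hα, one_add_rowE_mulVec u v hc⟩

lemma matOf_mkIA (u : Fin n) (v : Fin n → LaurentR n) (α : (LaurentR n)ˣ)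
    (hα : v u = (α : LaurentR n) - 1) (hc : ∑ q, v q * sg q = 0) :
    matOf (mkIA u v α hα hc) = 1 + rowE u v := rfl

lemma matOf_mul (g h : IAn n) : matOf (g * h) = matOf g * matOf h := rfl

lemma matOf_pow (g : IAn n) (t : ℕ) : matOf (g ^ t) = matOf g ^ t := by
  induction t with
  | zero => rfl
  | succ t ih => rw [pow_succ, pow_succ, ← ih]; rfl

lemma pow_mem_IApow (n m : ℕ) (g : IAn n) : g ^ m ∈ IApow n m :=
  Subgroup.subset_closure ⟨g, rfl⟩

lemma geom_inv_identity {A : Type*} [CommRing A] (x y : A) (hxy : x * y = 1) (m : ℕ) :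
    x ^ m * (∑ s ∈ Finset.range m, y ^ s) * y = ∑ s ∈ Finset.range m, x ^ s := by
  have hstep : ∀ s ∈ Finset.range m, x ^ m * y ^ s * y = x ^ (m - 1 - s) := by
    intro s hs
    rw [Finset.mem_range] at hs
    have h1 : x ^ m = x ^ (m - (s + 1)) * x ^ (s + 1) := by
      rw [← pow_add]; congr 1; omega
    have h2 : x ^ (s + 1) * y ^ (s + 1) = 1 := by rw [← mul_pow, hxy, one_pow]
    calc x ^ m * y ^ s * y = x ^ (m - (s + 1)) * (x ^ (s + 1) * y ^ (s + 1)) := by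
          rw [h1, pow_succ y]; ring
      _ = x ^ (m - 1 - s) := by rw [h2, mul_one]; congr 1; omega
  calc x ^ m * (∑ s ∈ Finset.range m, y ^ s) * y
      = ∑ s ∈ Finset.range m, x ^ m * y ^ s * y := by rw [Finset.mul_sum, Finset.sum_mul]
    _ = ∑ s ∈ Finset.range m, x ^ (m - 1 - s) := Finset.sum_congr rfl hstep
    _ = ∑ s ∈ Finset.range m, x ^ s := Finset.sum_range_reflect (fun s => x ^ s) m

/-- Key lemma: for any `i ≠ u` and any admissible row vector `c`, the matrix
`1 + rowE u (μ_{i,m}·c)` lies in `IA_n^m`. -/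
lemma key_mu (m : ℕ) (u i : Fin n) (hiu : i ≠ u) (c : Fin n → LaurentR n)
    (hcu : c u = 0) (hc : ∑ q, c q * sg q = 0) :
    ∃ g : IAn n, g ∈ IApow n m ∧ matOf g = 1 + rowE u (muv i m • c) := by
  have hxy : (Xv i) * (((Xu i)⁻¹ : (LaurentR n)ˣ) : LaurentR n) = 1 := (Xu i).mul_inv
  have hyx : (((Xu i)⁻¹ : (LaurentR n)ˣ) : LaurentR n) * (Xv i) = 1 := (Xu i).inv_mul
  have hXv : ((Xu i : (LaurentR n)ˣ) : LaurentR n) = Xv i := rfl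
  set y : LaurentR n := (((Xu i)⁻¹ : (LaurentR n)ˣ) : LaurentR n) with hy
  -- the conjugating element g
  set vg : Fin n → LaurentR n := Pi.single u (sg i) + Pi.single i (-(sg u)) with hvg
  have hvgu : vg u = ((Xu i : (LaurentR n)ˣ) : LaurentR n) - 1 := by
    rw [hvg]
    simp only [Pi.add_apply, Pi.single_eq_same, Pi.single_eq_of_ne (Ne.symm hiu), add_zero]
    rfl
  have hvgc : ∑ q, vg q * sg q = 0 := by
    have hterm : ∀ q, vg q * sg q =
        (if q = u then sg i * sg q else 0) + (if q = i then -(sg u) * sg q else 0) := by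
      intro q
      rw [hvg]
      simp only [Pi.add_apply, Pi.single_apply]
      split_ifs <;> ring
    rw [Finset.sum_congr rfl fun q _ => hterm q, Finset.sum_add_distrib,
      Finset.sum_ite_eq' Finset.univ u (fun q => sg i * sg q),
      Finset.sum_ite_eq' Finset.univ i (fun q => -(sg u) * sg q)]
    simp only [Finset.mem_univ, if_true]
    ring
  set g : IAn n := mkIA u vg (Xu i) hvgu hvgc with hg
  -- the element h with g^m * h^m the required element
  set vh : Fin n → LaurentR n := y • (c - vg) with hvh
  have hvhu : vh u = y - 1 := by
    rw [hvh]
    simp only [Pi.smul_apply, Pi.sub_apply, smul_eq_mul, hcu, hvgu, hXv]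
    linear_combination -hyx
  have hvhc : ∑ q, vh q * sg q = 0 := by
    have hterm : ∀ q, vh q * sg q = y * (c q * sg q) - y * (vg q * sg q) := by
      intro q
      rw [hvh]
      simp only [Pi.smul_apply, Pi.sub_apply, smul_eq_mul]
      ring
    rw [Finset.sum_congr rfl fun q _ => hterm q, Finset.sum_sub_distrib, ← Finset.mul_sum,
      ← Finset.mul_sum, hc, hvgc]
    ring
  set h : IAn n := mkIA u vh ((Xu i)⁻¹) hvhu hvhc with hh
  refine ⟨g ^ m * h ^ m, Subgroup.mul_mem _ (pow_mem_IApow n m g) (pow_mem_IApow n m h), ?_⟩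
  rw [matOf_mul, matOf_pow, matOf_pow, hg, hh, matOf_mkIA, matOf_mkIA,
    one_add_rowE_pow u vg ((Xu i : (LaurentR n)ˣ) : LaurentR n) hvgu m,
    one_add_rowE_pow u vh y hvhu m, one_add_rowE_mul]
  have hPu : (1 : LaurentR n) + ((∑ s ∈ Finset.range m, ((Xu i : (LaurentR n)ˣ) : LaurentR n) ^ s) • vg) u
      = (Xv i) ^ m := by
    simp only [Pi.smul_apply, smul_eq_mul, hvgu, hXv]
    linear_combination geom_sum_mul (Xv i) m
  have key2 := geom_inv_identity (Xv i) y hxy m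
  have hvec : (∑ s ∈ Finset.range m, ((Xu i : (LaurentR n)ˣ) : LaurentR n) ^ s) • vg
      + ((1 : LaurentR n) + ((∑ s ∈ Finset.range m, ((Xu i : (LaurentR n)ˣ) : LaurentR n) ^ s) • vg) u)
        • ((∑ s ∈ Finset.range m, y ^ s) • vh) = muv i m • c := by
    rw [hPu]
    funext q
    simp only [hvh, hXv, Pi.add_apply, Pi.smul_apply, Pi.sub_apply, smul_eq_mul, muv]
    linear_combination (c q - vg q) * key2
  rw [hvec]

/-- The admissibility sums for the generating vectors. -/
lemma sum_pair_mul (r : LaurentR n) (i j : Fin n) (W : Fin n → LaurentR n)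
    (hW : W = r • (Pi.single j (sg i) - Pi.single i (sg j))) :
    ∑ q, W q * sg q = 0 := by
  have hterm : ∀ q, W q * sg q =
      (if q = j then r * sg i * sg q else 0) - (if q = i then r * sg j * sg q else 0) := by
    intro q
    rw [hW]
    simp only [Pi.smul_apply, Pi.sub_apply, smul_eq_mul, Pi.single_apply]
    split_ifs <;> ring
  rw [Finset.sum_congr rfl fun q _ => hterm q, Finset.sum_sub_distrib,
    Finset.sum_ite_eq' Finset.univ j (fun q => r * sg i * sg q),
    Finset.sum_ite_eq' Finset.univ i (fun q => r * sg j * sg q)]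
  simp only [Finset.mem_univ, if_true]
  ring

lemma pair_apply_u (u : Fin n) (r : LaurentR n) (i j : Fin n) (hi : i ≠ u) (hj : j ≠ u)
    (W : Fin n → LaurentR n) (hW : W = r • (Pi.single j (sg i) - Pi.single i (sg j))) :
    W u = 0 := by
  rw [hW]
  simp [Pi.single_eq_of_ne (Ne.symm hj), Pi.single_eq_of_ne (Ne.symm hi)]

/-- `m`-multiple version: `1 + rowE u (m·c)` lies in `IA_n^m`. -/
lemma key_m (m : ℕ) (u : Fin n) (c : Fin n → LaurentR n)
    (hcu : c u = 0) (hc : ∑ q, c q * sg q = 0) :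
    ∃ g : IAn n, g ∈ IApow n m ∧ matOf g = 1 + rowE u ((m : LaurentR n) • c) := by
  have hcu' : c u = ((1 : (LaurentR n)ˣ) : LaurentR n) - 1 := by
    rw [hcu, Units.val_one, sub_self]
  refine ⟨(mkIA u c 1 hcu' hc) ^ m, pow_mem_IApow n m _, ?_⟩
  rw [matOf_pow, matOf_mkIA, one_add_rowE_pow u c 1 (by rw [hcu]; ring) m]
  have hs : (∑ s ∈ Finset.range m, (1 : LaurentR n) ^ s) = (m : LaurentR n) := by
    simp
  rw [hs]

lemma matOf_one : matOf (1 : IAn n) = 1 := rfl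

end Stmt11Aux

/-- (Elementary elements of type 1.)  For `n ≥ 3`, `u`, `m ≥ 1`, if the row
vector `a` (with `a_u = 0`) is an `R_n`-linear combination of the vectors
`m(σ_ie_j − σ_je_i)` (`i,j ≠ u`, `i ≠ j`), `σ_kμ_{k,m}(σ_ie_j − σ_je_i)` (`i,j,k ≠ u`,
`i ≠ j`) and `σ_kμ_{i,m}(σ_ie_j − σ_je_i)` (`i,j,k ≠ u`, `i ≠ j`, `k ≠ j`), then the matrix
equal to the identity except for the row `a` in the `u`-th row lies in `IA_n^m`. -/
theorem statement_11 (n m : ℕ) (hn : 3 ≤ n) (hm : 1 ≤ m) (u : Fin n)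
    (a : Fin n → LaurentR n) (hau : a u = 0)
    (ha : a ∈ Submodule.span (LaurentR n)
      ({v : Fin n → LaurentR n | ∃ i j : Fin n, i ≠ u ∧ j ≠ u ∧ i ≠ j ∧
          v = (m : LaurentR n) • (Pi.single j (sg i) - Pi.single i (sg j))} ∪
       {v : Fin n → LaurentR n | ∃ i j k : Fin n, i ≠ u ∧ j ≠ u ∧ k ≠ u ∧ i ≠ j ∧
          v = (sg k * muv k m) • (Pi.single j (sg i) - Pi.single i (sg j))} ∪
       {v : Fin n → LaurentR n | ∃ i j k : Fin n, i ≠ u ∧ j ≠ u ∧ k ≠ u ∧ i ≠ j ∧ k ≠ j ∧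
          v = (sg k * muv i m) • (Pi.single j (sg i) - Pi.single i (sg j))})) :
    ∃ g : IAn n, g ∈ IApow n m ∧
      matOf g = 1 + Matrix.of (fun p q : Fin n => if p = u then a q else 0) := by
  have main : ∀ r : LaurentR n,
      (r • a) u = 0 ∧ (∑ q, (r • a) q * sg q = 0) ∧
      ∃ g : IAn n, g ∈ IApow n m ∧ matOf g = 1 + rowE u (r • a) := by
    refine Submodule.span_induction (p := fun x _ => ∀ r : LaurentR n,
      (r • x) u = 0 ∧ (∑ q, (r • x) q * sg q = 0) ∧
      ∃ g : IAn n, g ∈ IApow n m ∧ matOf g = 1 + rowE u (r • x)) ?_ ?_ ?_ ?_ ha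
    · rintro x hx r
      rcases hx with (hx | hx) | hx
      · -- type 1 : x = m • W
        obtain ⟨i, j, hi, hj, hij, rfl⟩ := hx
        have hW : r • ((m : LaurentR n) • ((Pi.single j (sg i) - Pi.single i (sg j)) : Fin n → LaurentR n))
            = (r * (m : LaurentR n)) • ((Pi.single j (sg i) - Pi.single i (sg j)) : Fin n → LaurentR n) := by
          rw [smul_smul]
        refine ⟨pair_apply_u u _ i j hi hj _ hW, sum_pair_mul _ i j _ hW, ?_⟩
        obtain ⟨g, hg, hmat⟩ := key_m (n := n) m u
          (r • (Pi.single j (sg i) - Pi.single i (sg j)))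
          (pair_apply_u u r i j hi hj _ (by rfl)) (sum_pair_mul r i j _ (by rfl))
        refine ⟨g, hg, ?_⟩
        rw [hmat, smul_comm]
      · -- type 2 : x = (σ_k μ_{k,m}) • W
        obtain ⟨i, j, k, hi, hj, hk, hij, rfl⟩ := hx
        have hW : r • ((sg k * muv k m) • ((Pi.single j (sg i) - Pi.single i (sg j)) : Fin n → LaurentR n))
            = (r * (sg k * muv k m)) • ((Pi.single j (sg i) - Pi.single i (sg j)) : Fin n → LaurentR n) := by
          rw [smul_smul]
        refine ⟨pair_apply_u u _ i j hi hj _ hW, sum_pair_mul _ i j _ hW, ?_⟩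
        obtain ⟨g, hg, hmat⟩ := key_mu (n := n) m u k hk
          ((r * sg k) • (Pi.single j (sg i) - Pi.single i (sg j)))
          (pair_apply_u u (r * sg k) i j hi hj _ (by rfl)) (sum_pair_mul (r * sg k) i j _ (by rfl))
        refine ⟨g, hg, ?_⟩
        rw [hmat, smul_smul, smul_smul,
          show muv k m * (r * sg k) = r * (sg k * muv k m) from by ring]
      · -- type 3 : x = (σ_k μ_{i,m}) • W
        obtain ⟨i, j, k, hi, hj, hk, hij, hkj, rfl⟩ := hx
        have hW : r • ((sg k * muv i m) • ((Pi.single j (sg i) - Pi.single i (sg j)) : Fin n → LaurentR n))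
            = (r * (sg k * muv i m)) • ((Pi.single j (sg i) - Pi.single i (sg j)) : Fin n → LaurentR n) := by
          rw [smul_smul]
        refine ⟨pair_apply_u u _ i j hi hj _ hW, sum_pair_mul _ i j _ hW, ?_⟩
        obtain ⟨g, hg, hmat⟩ := key_mu (n := n) m u i hi
          ((r * sg k) • (Pi.single j (sg i) - Pi.single i (sg j)))
          (pair_apply_u u (r * sg k) i j hi hj _ (by rfl)) (sum_pair_mul (r * sg k) i j _ (by rfl))
        refine ⟨g, hg, ?_⟩
        rw [hmat, smul_smul, smul_smul,
          show muv i m * (r * sg k) = r * (sg k * muv i m) from by ring]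
    · intro r
      exact ⟨by simp, by simp, 1, Subgroup.one_mem _, by simp [matOf_one, rowE_zero]⟩
    · rintro x y hxmem hymem px py r
      obtain ⟨hx1, hx2, g1, hg1, hm1⟩ := px r
      obtain ⟨hy1, hy2, g2, hg2, hm2⟩ := py r
      refine ⟨?_, ?_, g1 * g2, Subgroup.mul_mem _ hg1 hg2, ?_⟩
      · have h0 : (r • (x + y)) u = (r • x) u + (r • y) u := by simp [smul_add, mul_add]
        rw [h0, hx1, hy1, add_zero]
      · have hterm : ∀ q, (r • (x + y)) q * sg q = (r • x) q * sg q + (r • y) q * sg q := by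
          intro q
          simp only [smul_add, Pi.add_apply]
          ring
        rw [Finset.sum_congr rfl fun q _ => hterm q, Finset.sum_add_distrib, hx2, hy2, add_zero]
      · rw [matOf_mul, hm1, hm2, one_add_rowE_mul, hx1, add_zero, one_smul, ← smul_add]
    · intro s x hxmem px r
      rw [smul_smul]
      exact px (r * s)
  obtain ⟨-, -, g, hg, hmat⟩ := main 1
  rw [one_smul] at hmat
  refine ⟨g, hg, ?_⟩
  rw [hmat]
  congr 1
  ext p q
  simp [rowE_apply, Matrix.of_apply]
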